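/- (Gauge reduction of the general system to the A = 0 system.) Let D ⊆ ℂ be open, let A, B, Ψ, g : D → Matrix (Fin N) (Fin N) ℂ be real-differentiable, and assume on D: ∂_z̄ Ψ + A·Ψ + B·conj(Ψ) = 0, ∂_z̄ g + A·g = 0, and g(z) is invertible for every z ∈ D. Define Ψ̃ = g⁻¹·Ψ and B̃ = g⁻¹·B·conj(g). Then ∂_z̄ Ψ̃ + B̃·conj(Ψ̃) = 0 on D. -/

import Mathlib

open Complex Matrix

/-- Entrywise Wirtinger derivative ∂_z f = (1/2)(∂f/∂x − i ∂f/∂y). -/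
noncomputable def wDz {N : ℕ} (f : ℂ → Matrix (Fin N) (Fin N) ℂ) (z : ℂ) :
    Matrix (Fin N) (Fin N) ℂ :=
  Matrix.of fun i j =>
    (1 / 2 : ℂ) * (fderiv ℝ (fun w => f w i j) z 1
      - Complex.I * fderiv ℝ (fun w => f w i j) z Complex.I)

/-- Entrywise Wirtinger derivative ∂_z̄ f = (1/2)(∂f/∂x + i ∂f/∂y). -/
noncomputable def wDzbar {N : ℕ} (f : ℂ → Matrix (Fin N) (Fin N) ℂ) (z : ℂ) :
    Matrix (Fin N) (Fin N) ℂ :=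
  Matrix.of fun i j =>
    (1 / 2 : ℂ) * (fderiv ℝ (fun w => f w i j) z 1
      + Complex.I * fderiv ℝ (fun w => f w i j) z Complex.I)

/-- Real-differentiability, entrywise, at every point of `D`. -/
def MatDiffOn {N : ℕ} (f : ℂ → Matrix (Fin N) (Fin N) ℂ) (D : Set ℂ) : Prop :=
  ∀ z ∈ D, ∀ i j, DifferentiableAt ℝ (fun w => f w i j) z

/-- Entrywise complex conjugate of a matrix. -/
def mconj {N : ℕ} (M : Matrix (Fin N) (Fin N) ℂ) : Matrix (Fin N) (Fin N) ℂ :=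
  M.map (starRingEnd ℂ)

/-- Scalar Wirtinger ∂̄. -/
noncomputable def dzbar (u : ℂ → ℂ) (z : ℂ) : ℂ :=
  (1 / 2 : ℂ) * (fderiv ℝ u z 1 + Complex.I * fderiv ℝ u z Complex.I)

lemma dzbar_congr {u v : ℂ → ℂ} {z : ℂ} (h : u =ᶠ[nhds z] v) :
    dzbar u z = dzbar v z := by
  rw [dzbar, dzbar, h.fderiv_eq]

lemma dzbar_const (c z : ℂ) : dzbar (fun _ => c) z = 0 := by
  simp [dzbar]

lemma dzbar_mul {u v : ℂ → ℂ} {z : ℂ} (hu : DifferentiableAt ℝ u z)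
    (hv : DifferentiableAt ℝ v z) :
    dzbar (fun w => u w * v w) z = dzbar u z * v z + u z * dzbar v z := by
  simp only [dzbar, fderiv_fun_mul hu hv, ContinuousLinearMap.add_apply,
    ContinuousLinearMap.smul_apply, smul_eq_mul]
  ring

lemma dzbar_sum {ι : Type*} (s : Finset ι) {u : ι → ℂ → ℂ} {z : ℂ}
    (hu : ∀ i ∈ s, DifferentiableAt ℝ (u i) z) :
    dzbar (fun w => ∑ i ∈ s, u i w) z = ∑ i ∈ s, dzbar (u i) z := by
  simp only [dzbar, fderiv_fun_sum hu, ContinuousLinearMap.sum_apply, Finset.mul_sum,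
    Finset.sum_add_distrib, ← Finset.sum_add_distrib, mul_add]

lemma wDzbar_apply {N : ℕ} (f : ℂ → Matrix (Fin N) (Fin N) ℂ) (z : ℂ) (i j : Fin N) :
    wDzbar f z i j = dzbar (fun w => f w i j) z := rfl

lemma wDzbar_mul {N : ℕ} {f h : ℂ → Matrix (Fin N) (Fin N) ℂ} {z : ℂ}
    (hf : ∀ i j, DifferentiableAt ℝ (fun w => f w i j) z)
    (hh : ∀ i j, DifferentiableAt ℝ (fun w => h w i j) z) :
    wDzbar (fun w => f w * h w) z = wDzbar f z * h z + f z * wDzbar h z := by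
  ext i j
  have e : (fun w => (f w * h w) i j) = fun w => ∑ k, f w i k * h w k j := by
    funext w; simp [Matrix.mul_apply]
  rw [wDzbar_apply, e, dzbar_sum _ (fun k _ => (hf i k).fun_mul (hh k j))]
  simp only [Matrix.add_apply, Matrix.mul_apply, wDzbar_apply]
  rw [← Finset.sum_add_distrib]
  exact Finset.sum_congr rfl fun k _ => dzbar_mul (hf i k) (hh k j)

lemma detDiff {N : ℕ} {f : ℂ → Matrix (Fin N) (Fin N) ℂ} {z : ℂ}
    (hf : ∀ i j, DifferentiableAt ℝ (fun w => f w i j) z) :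
    DifferentiableAt ℝ (fun w => (f w).det) z := by
  simp only [Matrix.det_apply']
  apply DifferentiableAt.fun_sum
  intro σ _
  exact ((HasFDerivAt.finset_prod
    (fun i _ => (hf (σ i) i).hasFDerivAt)).differentiableAt).const_mul _

lemma adjDiff {N : ℕ} {f : ℂ → Matrix (Fin N) (Fin N) ℂ} {z : ℂ}
    (hf : ∀ i j, DifferentiableAt ℝ (fun w => f w i j) z) (i j : Fin N) :
    DifferentiableAt ℝ (fun w => (f w).adjugate i j) z := by
  simp only [Matrix.adjugate_apply]
  apply detDiff
  intro k l
  simp only [Matrix.updateRow_apply]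
  by_cases hk : k = j
  · simp [hk]
  · simpa [hk] using hf k l

lemma invDiff {N : ℕ} {f : ℂ → Matrix (Fin N) (Fin N) ℂ} {z : ℂ}
    (hf : ∀ i j, DifferentiableAt ℝ (fun w => f w i j) z) (hz : IsUnit (f z)) :
    ∀ i j, DifferentiableAt ℝ (fun w => (f w)⁻¹ i j) z := by
  intro i j
  have e : (fun w => (f w)⁻¹ i j) = fun w => ((f w).det)⁻¹ * (f w).adjugate i j := by
    funext w
    rw [Matrix.inv_def, Ring.inverse_eq_inv]
    simp [Matrix.smul_apply, smul_eq_mul]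
  rw [e]
  have hdet : (f z).det ≠ 0 :=
    ((Matrix.isUnit_iff_isUnit_det _).mp hz).ne_zero
  exact ((detDiff hf).inv hdet).mul (adjDiff hf i j)

lemma mconj_mul {N : ℕ} (M P : Matrix (Fin N) (Fin N) ℂ) :
    mconj (M * P) = mconj M * mconj P := by
  simp [mconj, Matrix.map_mul]

lemma mconj_one {N : ℕ} : mconj (1 : Matrix (Fin N) (Fin N) ℂ) = 1 := by
  simp [mconj]

/-- gauge reduction: if ∂_z̄ Ψ + A·Ψ + B·conj Ψ = 0, ∂_z̄ g + A·g = 0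
and g is invertible on D, then Ψ̃ = g⁻¹·Ψ satisfies ∂_z̄ Ψ̃ + B̃·conj Ψ̃ = 0 with
B̃ = g⁻¹·B·conj g. -/
theorem gauge_reduction {N : ℕ} (D : Set ℂ) (hD : IsOpen D)
    (A B Ψ g : ℂ → Matrix (Fin N) (Fin N) ℂ)
    (hA : MatDiffOn A D) (hB : MatDiffOn B D) (hΨ : MatDiffOn Ψ D) (hg : MatDiffOn g D)
    (hΨsys : ∀ z ∈ D, wDzbar Ψ z + A z * Ψ z + B z * mconj (Ψ z) = 0)
    (hgsys : ∀ z ∈ D, wDzbar g z + A z * g z = 0)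
    (hginv : ∀ z ∈ D, IsUnit (g z)) :
    ∀ z ∈ D,
      wDzbar (fun w => (g w)⁻¹ * Ψ w) z
        + ((g z)⁻¹ * B z * mconj (g z)) * mconj ((g z)⁻¹ * Ψ z) = 0 := by
  intro z hz
  have hgd := hg z hz
  have hΨd := hΨ z hz
  have hgid := invDiff hgd (hginv z hz)
  have hdet : IsUnit (g z).det := (Matrix.isUnit_iff_isUnit_det _).mp (hginv z hz)
  have h1 : g z * (g z)⁻¹ = 1 := Matrix.mul_nonsing_inv _ hdet
  have h1' : (g z)⁻¹ * g z = 1 := Matrix.nonsing_inv_mul _ hdet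
  have hc1 : mconj (g z) * mconj ((g z)⁻¹) = 1 := by
    rw [← mconj_mul, h1, mconj_one]
  -- ∂̄ of g * g⁻¹ is 0 since it is locally constant 1
  have hzero : wDzbar (fun w => g w * (g w)⁻¹) z = 0 := by
    ext i j
    rw [wDzbar_apply]
    have hev : (fun w => (g w * (g w)⁻¹) i j) =ᶠ[nhds z]
        fun _ => (1 : Matrix (Fin N) (Fin N) ℂ) i j := by
      filter_upwards [hD.mem_nhds hz] with w hw
      rw [Matrix.mul_nonsing_inv _ ((Matrix.isUnit_iff_isUnit_det _).mp (hginv w hw))]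
    rw [dzbar_congr hev, dzbar_const]
    simp
  have hprod : wDzbar g z * (g z)⁻¹ + g z * wDzbar (fun w => (g w)⁻¹) z = 0 := by
    rw [← wDzbar_mul hgd hgid, hzero]
  have hDg : wDzbar g z = -(A z * g z) := by
    exact eq_neg_of_add_eq_zero_left (hgsys z hz)
  have hDΨ : wDzbar Ψ z = -(A z * Ψ z + B z * mconj (Ψ z)) := by
    have := hΨsys z hz
    rw [add_assoc] at this
    exact eq_neg_of_add_eq_zero_left this
  have hDgi : wDzbar (fun w => (g w)⁻¹) z = (g z)⁻¹ * A z := by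
    have h2 : g z * wDzbar (fun w => (g w)⁻¹) z = A z := by
      have := hprod
      rw [hDg] at this
      have h3 : g z * wDzbar (fun w => (g w)⁻¹) z = A z * g z * (g z)⁻¹ := by
        have h4 := eq_neg_of_add_eq_zero_right this
        rw [h4, neg_mul, neg_neg]
      rw [h3, mul_assoc, h1, mul_one]
    calc wDzbar (fun w => (g w)⁻¹) z
        = ((g z)⁻¹ * g z) * wDzbar (fun w => (g w)⁻¹) z := by rw [h1', one_mul]
      _ = (g z)⁻¹ * (g z * wDzbar (fun w => (g w)⁻¹) z) := by rw [mul_assoc]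
      _ = (g z)⁻¹ * A z := by rw [h2]
  rw [wDzbar_mul hgid hΨd, hDgi, hDΨ, mconj_mul]
  have hlast : ((g z)⁻¹ * B z * mconj (g z)) * (mconj ((g z)⁻¹) * mconj (Ψ z))
      = (g z)⁻¹ * (B z * mconj (Ψ z)) := by
    rw [mul_assoc ((g z)⁻¹ * B z), ← mul_assoc (mconj (g z)), hc1, one_mul, mul_assoc]
  rw [hlast]
  rw [mul_assoc]
  simp only [mul_neg, mul_add]
  abel
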